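/- Let α > 0 and let τ : ℝ → ℝ be twice differentiable with τ(t) > 0 for all t, τ(0) = 1, τ'(0) = 0, and τ''(t) = α / (2 τ(t)^(1+α)) for all t ∈ ℝ. Then there exists a constant c > 0 such that τ(t) ≥ c(1 + t) for all t ≥ 0. -/

import Mathlib

/-- Linear lower bound for the solution of the scaling ODE:
there is `c > 0` with `τ(t) ≥ c (1 + t)` for all `t ≥ 0`. -/
theorem scaling_ode_linear_lower_bound (α : ℝ) (hα : 0 < α) (τ τ' : ℝ → ℝ)
    (hpos : ∀ t, 0 < τ t) (hτ0 : τ 0 = 1) (hτ'0 : τ' 0 = 0)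
    (hd1 : ∀ t, HasDerivAt τ (τ' t) t)
    (hd2 : ∀ t, HasDerivAt τ' (α / (2 * τ t ^ (1 + α))) t) :
    ∃ c > 0, ∀ t ≥ (0 : ℝ), c * (1 + t) ≤ τ t := by
  have hder2 : ∀ t, deriv τ' t = α / (2 * τ t ^ (1 + α)) := fun t => (hd2 t).deriv
  have hder1 : ∀ t, deriv τ t = τ' t := fun t => (hd1 t).deriv
  have h2pos : ∀ t, 0 < α / (2 * τ t ^ (1 + α)) := by
    intro t
    have := Real.rpow_pos_of_pos (hpos t) (1 + α)
    positivity
  have hsm : StrictMono τ' := by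
    apply strictMono_of_deriv_pos
    intro x; rw [hder2]; exact h2pos x
  have hτ'pos : ∀ t > (0:ℝ), 0 < τ' t := by
    intro t ht
    have := hsm ht
    rwa [hτ'0] at this
  have hτmono : MonotoneOn τ (Set.Ici (0:ℝ)) := by
    apply monotoneOn_of_deriv_nonneg (convex_Ici 0)
      (continuous_iff_continuousAt.2 fun x => (hd1 x).continuousAt).continuousOn
      (fun x hx => ((hd1 x).differentiableAt).differentiableWithinAt)
    intro x hx
    rw [interior_Ici] at hx
    rw [hder1]
    exact (hτ'pos x hx).le
  set m := τ' 1 with hm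
  have hmpos : 0 < m := hτ'pos 1 one_pos
  -- g t = τ t - m * t is monotone on [1, ∞)
  have hgmono : MonotoneOn (fun t => τ t - m * t) (Set.Ici (1:ℝ)) := by
    have hdg : ∀ t, HasDerivAt (fun t => τ t - m * t) (τ' t - m) t := by
      intro t
      have h := (hd1 t).sub ((hasDerivAt_id' t).const_mul m)
      simp only [mul_one] at h
      exact h
    apply monotoneOn_of_deriv_nonneg (convex_Ici 1)
      (continuous_iff_continuousAt.2 fun x => (hdg x).continuousAt).continuousOn
      (fun x hx => ((hdg x).differentiableAt).differentiableWithinAt)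
    intro x hx
    rw [interior_Ici] at hx
    rw [(hdg x).deriv]
    have := hsm hx
    linarith
  have hτ1 : (1:ℝ) ≤ τ 1 := by
    have := hτmono (Set.mem_Ici.2 le_rfl) (Set.mem_Ici.2 zero_le_one) zero_le_one
    linarith [hτ0 ▸ this]
  refine ⟨min 1 m / 2, by positivity, ?_⟩
  intro t ht
  have h1 : min 1 m ≤ 1 := min_le_left _ _
  have h2 : min 1 m ≤ m := min_le_right _ _
  rcases le_total t 1 with h | h
  · have : τ 0 ≤ τ t := hτmono (Set.mem_Ici.2 le_rfl) (Set.mem_Ici.2 ht) ht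
    rw [hτ0] at this
    nlinarith
  · have hg : τ 1 - m * 1 ≤ τ t - m * t :=
      hgmono (Set.mem_Ici.2 le_rfl) (Set.mem_Ici.2 h) h
    have hm1 : 0 < min 1 m := lt_min one_pos hmpos
    nlinarith
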